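/- Let $u, p \in (0,1)$ and let $\nu_u$ be the unique stationary distribution of the IFS $T_0(x) = 1-u+ux$, $T_1(x) = ux$ on $[0,1]$ with probability weights $(1-p, p)$. Then $\nu_u$ equals the distribution of the random series $\frac{1-u}{u}\sum_{k=0}^\infty u^{T_k}$, where $T_k = G_0 + \cdots + G_k$ and $G_0, G_1, \dots$ are IID geometric($1-p$) random variables on $\{1,2,\dots\}$. -/

import Mathlib

open MeasureTheory Set
open scoped ENNReal NNReal

private lemma aux_tsum_toReal {f : ℕ → ℝ} (hf : ∀ n, 0 ≤ f n) :
    ∑' n, f n = (∑' n, ENNReal.ofReal (f n)).toReal := by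
  by_cases h : Summable f
  · rw [← ENNReal.ofReal_tsum_of_nonneg hf h, ENNReal.toReal_ofReal (tsum_nonneg hf)]
  · rw [tsum_eq_zero_of_not_summable h]
    by_cases htop : ∑' n, ENNReal.ofReal (f n) = ⊤
    · simp [htop]
    · exfalso; apply h
      have h2 := ENNReal.summable_toReal htop
      have h3 : (fun n => (ENNReal.ofReal (f n)).toReal) = f :=
        funext fun n => ENNReal.toReal_ofReal (hf n)
      rwa [h3] at h2

set_option maxHeartbeats 2000000 in
/-- the unique stationary distribution `ν_u` of the IFS
`T₀ x = 1-u+ux`, `T₁ x = ux` with weights `(1-p, p)` is the distribution of the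
random series `((1-u)/u) ∑_k u^{T_k}`, where `T_k` are partial sums of IID
geometric(1-p) random variables. -/
theorem stmt17
    {Ω : Type*} [MeasurableSpace Ω] (P : Measure Ω) [IsProbabilityMeasure P]
    (u p : ℝ) (hu : u ∈ Set.Ioo (0:ℝ) 1) (hp : p ∈ Set.Ioo (0:ℝ) 1)
    (G : ℕ → Ω → ℕ) (hmeas : ∀ i, Measurable (G i))
    (hindep : ProbabilityTheory.iIndepFun G P)
    (hgeom : ∀ i n, 1 ≤ n → P {ω | G i ω = n} = ENNReal.ofReal (p ^ (n - 1) * (1 - p)))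
    (T : ℕ → Ω → ℕ) (hT : ∀ k ω, T k ω = ∑ i ∈ Finset.range (k + 1), G i ω)
    (ν : Measure ℝ) [IsProbabilityMeasure ν] (hsupp : ν (Set.Icc (0:ℝ) 1)ᶜ = 0)
    (hss : ν = ENNReal.ofReal (1 - p) • ν.map (fun x => 1 - u + u * x)
          + ENNReal.ofReal p • ν.map (fun x => u * x)) :
    ν = P.map (fun ω => (1 - u) / u * ∑' k, u ^ (T k ω)) := by
  obtain ⟨hu0, hu1⟩ := hu
  obtain ⟨hp0, hp1⟩ := hp
  -- the shifted series
  set S : ℕ → Ω → ℝ :=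
    fun j ω => (1 - u) / u * ∑' k, u ^ (∑ i ∈ Finset.range (k + 1), G (j + i) ω) with hS_def
  -- measurability (relative to any sub-σ-algebra making the relevant G's measurable)
  have hSm : ∀ (m' : MeasurableSpace Ω) (j : ℕ), (∀ i, Measurable[m'] (G (j + i))) →
      Measurable[m'] (S j) := by
    intro m' j hm'
    have hrw : S j = fun ω => (1 - u) / u *
        (∑' k, ENNReal.ofReal (u ^ (∑ i ∈ Finset.range (k + 1), G (j + i) ω))).toReal := by
      funext ω
      show (1 - u) / u * ∑' k, u ^ (∑ i ∈ Finset.range (k + 1), G (j + i) ω) = _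
      congr 1
      exact aux_tsum_toReal (fun k => pow_nonneg hu0.le _)
    rw [hrw]
    apply Measurable.const_mul
    apply Measurable.ennreal_toReal
    apply Measurable.ennreal_tsum
    intro k
    apply Measurable.ennreal_ofReal
    exact measurable_from_nat.comp (Finset.measurable_sum _ (fun i _ => hm' i))
  have hSmeas : ∀ j, Measurable (S j) := fun j => hSm _ j (fun i => hmeas (j + i))
  -- each G i is a.s. ≥ 1
  have hsetm : ∀ j n, MeasurableSet {ω | G j ω = n} := by
    intro j n
    have : {ω | G j ω = n} = G j ⁻¹' {n} := by ext ω; simp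
    rw [this]; exact hmeas j (MeasurableSet.singleton n)
  have hdisjG : ∀ j, Pairwise (Function.onFun Disjoint fun n => {ω | G j ω = n}) := by
    intro j m n hmn
    rw [Function.onFun, Set.disjoint_left]
    intro ω h1 h2
    exact hmn (h1.symm.trans h2)
  have hgn : ∀ j n, P {ω | G j ω = n + 1} = ENNReal.ofReal (p ^ n * (1 - p)) := by
    intro j n
    have := hgeom j (n + 1) (by omega)
    simpa using this
  have hzero : ∀ j, P {ω | G j ω = 0} = 0 := by
    intro j
    have h1 : ∑' n : ℕ, P {ω | G j ω = n} = 1 := by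
      rw [← measure_iUnion (hdisjG j) (hsetm j)]
      have : (⋃ n, {ω | G j ω = n}) = Set.univ := by ext ω; simp
      rw [this, measure_univ]
    have h2 : ∑' n : ℕ, P {ω | G j ω = n + 1} = 1 := by
      have hterm : ∀ n : ℕ, P {ω | G j ω = n + 1}
          = ENNReal.ofReal (1 - p) * ENNReal.ofReal p ^ n := by
        intro n
        rw [hgn j n, ENNReal.ofReal_mul (pow_nonneg hp0.le n), ENNReal.ofReal_pow hp0.le,
          mul_comm]
      rw [tsum_congr hterm, ENNReal.tsum_mul_left, ENNReal.tsum_geometric]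
      have hsub : (1 : ℝ≥0∞) - ENNReal.ofReal p = ENNReal.ofReal (1 - p) := by
        rw [← ENNReal.ofReal_one, ← ENNReal.ofReal_sub _ hp0.le]
      rw [hsub, ENNReal.mul_inv_cancel (by simp [ENNReal.ofReal_pos]; linarith)
        ENNReal.ofReal_ne_top]
    rw [tsum_eq_zero_add' (f := fun n => P {ω | G j ω = n}) ENNReal.summable, h2] at h1
    have h3 : P {ω | G j ω = 0} + 1 = 0 + 1 := by simpa using h1
    exact (ENNReal.add_left_inj (by simp)).1 h3
  set E : Set Ω := {ω | ∀ i, 1 ≤ G i ω} with hE_def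
  have hEc : P Eᶜ = 0 := by
    refine measure_mono_null ?_ (measure_iUnion_null fun i => hzero i)
    intro ω hω
    simp only [hE_def, Set.mem_compl_iff, Set.mem_setOf_eq, not_forall] at hω
    obtain ⟨i, hi⟩ := hω
    exact Set.mem_iUnion.2 ⟨i, show G i ω = 0 by omega⟩
  -- summability on E
  have hNge : ∀ ω ∈ E, ∀ j k, k + 1 ≤ ∑ i ∈ Finset.range (k + 1), G (j + i) ω := by
    intro ω hω j k
    calc k + 1 = ∑ _i ∈ Finset.range (k + 1), 1 := by simp
    _ ≤ ∑ i ∈ Finset.range (k + 1), G (j + i) ω := Finset.sum_le_sum fun i _ => hω (j + i)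
  have hgeo1 : Summable (fun k : ℕ => u ^ (k + 1)) := by
    have := (summable_geometric_of_lt_one hu0.le hu1).mul_left u
    apply this.congr
    intro k
    rw [pow_succ']
  have hsummable : ∀ ω ∈ E, ∀ j,
      Summable (fun k => u ^ (∑ i ∈ Finset.range (k + 1), G (j + i) ω)) := by
    intro ω hω j
    apply Summable.of_nonneg_of_le (fun k => pow_nonneg hu0.le _) (fun k => ?_) hgeo1
    exact pow_le_pow_of_le_one hu0.le hu1.le (hNge ω hω j k)
  have hrange : ∀ ω ∈ E, ∀ j, S j ω ∈ Set.Icc (0:ℝ) 1 := by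
    intro ω hω j
    have hfrac : (0:ℝ) ≤ (1 - u) / u := div_nonneg (by linarith) hu0.le
    constructor
    · exact mul_nonneg hfrac (tsum_nonneg fun k => pow_nonneg hu0.le _)
    · have h1 : ∑' k, u ^ (∑ i ∈ Finset.range (k + 1), G (j + i) ω) ≤ ∑' k : ℕ, u ^ (k + 1) :=
        Summable.tsum_le_tsum (fun k => pow_le_pow_of_le_one hu0.le hu1.le (hNge ω hω j k))
          (hsummable ω hω j) hgeo1
      have h2 : ∑' k : ℕ, u ^ (k + 1) = u * (1 - u)⁻¹ := by
        have : (fun k : ℕ => u ^ (k + 1)) = fun k : ℕ => u * u ^ k := by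
          funext k; rw [pow_succ']
        rw [this, tsum_mul_left, tsum_geometric_of_lt_one hu0.le hu1]
      calc S j ω ≤ (1 - u) / u * (u * (1 - u)⁻¹) := by
            apply mul_le_mul_of_nonneg_left _ hfrac
            rw [← h2]; exact h1
      _ = 1 := by
            rw [div_eq_mul_inv,
              show (1 - u) * u⁻¹ * (u * (1 - u)⁻¹) = (1 - u) * (1 - u)⁻¹ * (u⁻¹ * u) by ring,
              mul_inv_cancel₀ (by linarith : (1:ℝ) - u ≠ 0),
              inv_mul_cancel₀ (ne_of_gt hu0), mul_one]
  -- the recursion S j = q (G j) (S (j+1)) on E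
  set q : ℕ → ℝ → ℝ := fun n x => u ^ (n - 1) * (1 - u + u * x) with hq_def
  have hqmeas : ∀ n, Measurable (q n) := by intro n; rw [hq_def]; fun_prop
  have hrec : ∀ ω ∈ E, ∀ j, S j ω = q (G j ω) (S (j + 1) ω) := by
    intro ω hω j
    have hsum := hsummable ω hω j
    have hshift : ∀ k : ℕ, u ^ (∑ i ∈ Finset.range (k + 1 + 1), G (j + i) ω)
        = u ^ (G j ω) * u ^ (∑ i ∈ Finset.range (k + 1), G (j + 1 + i) ω) := by
      intro k
      rw [← pow_add]
      congr 1
      have e0 : G (j + 0) ω = G j ω := by norm_num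
      have e1 : ∑ i ∈ Finset.range (k + 1), G (j + (i + 1)) ω
          = ∑ i ∈ Finset.range (k + 1), G (j + 1 + i) ω :=
        Finset.sum_congr rfl (fun i _ => by congr 1; omega)
      rw [Finset.sum_range_succ' (fun i => G (j + i) ω) (k + 1), e0, e1]
      exact add_comm _ _
    have key : ∑' k, u ^ (∑ i ∈ Finset.range (k + 1), G (j + i) ω)
        = u ^ (G j ω) * (1 + ∑' k, u ^ (∑ i ∈ Finset.range (k + 1), G (j + 1 + i) ω)) := by
      rw [Summable.tsum_eq_zero_add hsum]
      have h0 : u ^ (∑ i ∈ Finset.range (0 + 1), G (j + i) ω) = u ^ (G j ω) := by simp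
      rw [h0, tsum_congr hshift, tsum_mul_left]
      ring
    have hG : u ^ (G j ω) = u * u ^ (G j ω - 1) := by
      have h1 : G j ω = (G j ω - 1) + 1 := by have := hω j; omega
      rw [h1]
      have : G j ω - 1 + 1 - 1 = G j ω - 1 := by omega
      rw [this, pow_succ]
      ring
    show (1 - u) / u * ∑' k, u ^ (∑ i ∈ Finset.range (k + 1), G (j + i) ω)
      = u ^ (G j ω - 1) * (1 - u + u * ((1 - u) / u
        * ∑' k, u ^ (∑ i ∈ Finset.range (k + 1), G (j + 1 + i) ω)))
    rw [key, hG]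
    field_simp
  -- independence of G j and S (j+1)
  have hind : ∀ j n (B : Set ℝ), MeasurableSet B →
      P ({ω | G j ω = n} ∩ S (j + 1) ⁻¹' B) = P {ω | G j ω = n} * P (S (j + 1) ⁻¹' B) := by
    intro j n B hB
    have hii : ProbabilityTheory.iIndep (fun i => MeasurableSpace.comap (G i) inferInstance) P :=
      hindep
    have hdis : Disjoint ({j} : Set ℕ) {i : ℕ | j + 1 ≤ i} := by
      rw [Set.disjoint_left]
      rintro a rfl h
      simp only [Set.mem_setOf_eq] at h; omega
    have hIndep := ProbabilityTheory.indep_iSup_of_disjoint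
      (fun i => (hmeas i).comap_le) hii hdis
    apply (hIndep.indepSet_of_measurableSet ?_ ?_).measure_inter_eq_mul
    · have h1 : MeasurableSet[MeasurableSpace.comap (G j) inferInstance] {ω | G j ω = n} :=
        ⟨{n}, MeasurableSet.singleton n, by ext ω; simp⟩
      exact (le_iSup₂ (f := fun (i : ℕ) (_ : i ∈ ({j} : Set ℕ)) =>
        MeasurableSpace.comap (G i) inferInstance) j rfl) _ h1
    · have hm : Measurable[⨆ i ∈ {i : ℕ | j + 1 ≤ i},
          MeasurableSpace.comap (G i) inferInstance] (S (j + 1)) := by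
        apply hSm
        intro k
        apply Measurable.of_comap_le
        exact le_iSup₂ (f := fun (i : ℕ) (_ : i ∈ {i : ℕ | j + 1 ≤ i}) =>
          MeasurableSpace.comap (G i) inferInstance) (j + 1 + k) (by simp; omega)
      exact hm hB
  -- the image measures
  set μ : ℕ → Measure ℝ := fun j => P.map (S j) with hμ_def
  have hμprob : ∀ j, IsProbabilityMeasure (μ j) :=
    fun j => Measure.isProbabilityMeasure_map (hSmeas j).aemeasurable
  have hμapp : ∀ j (A : Set ℝ), MeasurableSet A → μ j A = P (S j ⁻¹' A) :=
    fun j A hA => Measure.map_apply (hSmeas j) hA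
  -- key decomposition
  have hkey : ∀ j (A : Set ℝ), MeasurableSet A →
      μ j A = ∑' n : ℕ, P {ω | G j ω = n + 1} * μ (j + 1) (q (n + 1) ⁻¹' A) := by
    intro j A hA
    rw [hμapp j A hA]
    have hcover : S j ⁻¹' A = ⋃ n : ℕ, ({ω | G j ω = n} ∩ S j ⁻¹' A) := by
      ext ω; simp
    have hdisj2 : Pairwise (Function.onFun Disjoint fun n => {ω | G j ω = n} ∩ S j ⁻¹' A) := by
      intro m n hmn
      show Disjoint ({ω | G j ω = m} ∩ S j ⁻¹' A) ({ω | G j ω = n} ∩ S j ⁻¹' A)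
      rw [Set.disjoint_left]
      rintro ω ⟨h1, -⟩ ⟨h2, -⟩
      exact hmn (h1.symm.trans h2)
    rw [hcover, measure_iUnion hdisj2 (fun n => (hsetm j n).inter (hSmeas j hA)),
      tsum_eq_zero_add' (f := fun n => P ({ω | G j ω = n} ∩ S j ⁻¹' A)) ENNReal.summable]
    have h0 : P ({ω | G j ω = 0} ∩ S j ⁻¹' A) = 0 :=
      measure_mono_null Set.inter_subset_left (hzero j)
    rw [h0, zero_add]
    apply tsum_congr
    intro n
    have hae : (({ω | G j ω = n + 1} ∩ S j ⁻¹' A : Set Ω))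
        =ᵐ[P] (({ω | G j ω = n + 1} ∩ S (j + 1) ⁻¹' (q (n + 1) ⁻¹' A) : Set Ω)) := by
      rw [MeasureTheory.ae_eq_set]
      constructor
      · apply measure_mono_null _ hEc
        rintro ω ⟨⟨h1, h2⟩, h3⟩
        intro hωE
        apply h3
        refine ⟨h1, ?_⟩
        simp only [Set.mem_preimage] at h2 ⊢
        rw [← h1, ← hrec ω hωE j]
        exact h2
      · apply measure_mono_null _ hEc
        rintro ω ⟨⟨h1, h2⟩, h3⟩
        intro hωE
        apply h3
        refine ⟨h1, ?_⟩
        simp only [Set.mem_preimage] at h2 ⊢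
        rw [hrec ω hωE j, h1]
        exact h2
    rw [measure_congr hae, hind j (n + 1) (q (n + 1) ⁻¹' A) (hqmeas (n + 1) hA),
      hμapp (j + 1) _ (hqmeas (n + 1) hA)]
  -- the one-step self-similarity for the μ's
  have hT₀m : Measurable (fun x : ℝ => 1 - u + u * x) := by fun_prop
  have hT₁m : Measurable (fun x : ℝ => u * x) := by fun_prop
  have hR : ∀ j, μ j = ENNReal.ofReal (1 - p) • (μ (j + 1)).map (fun x => 1 - u + u * x)
      + ENNReal.ofReal p • (μ j).map (fun x => u * x) := by
    intro j
    ext A hA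
    rw [Measure.add_apply, Measure.smul_apply, Measure.smul_apply,
      Measure.map_apply hT₀m hA, Measure.map_apply hT₁m hA, smul_eq_mul, smul_eq_mul,
      hkey j A hA, hkey j _ (hT₁m hA)]
    have hq2 : ∀ n : ℕ, q (n + 1) ⁻¹' ((fun x : ℝ => u * x) ⁻¹' A) = q (n + 2) ⁻¹' A := by
      intro n
      rw [← Set.preimage_comp]
      have hcomp : ((fun x : ℝ => u * x) ∘ q (n + 1)) = q (n + 2) := by
        funext x
        simp only [Function.comp_apply, hq_def, Nat.add_sub_cancel]
        have h21 : n + 2 - 1 = n + 1 := by omega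
        rw [h21, pow_succ]
        ring
      rw [hcomp]
    have hc0 : ENNReal.ofReal (1 - p) = P {ω | G j ω = 0 + 1} := by
      rw [hgn j 0]; simp
    have hT0q : (fun x : ℝ => 1 - u + u * x) ⁻¹' A = q 1 ⁻¹' A := by
      congr 1
      funext x
      simp [hq_def]
    have hpc : ∀ n : ℕ, ENNReal.ofReal p * P {ω | G j ω = n + 1} = P {ω | G j ω = n + 1 + 1} := by
      intro n
      rw [hgn j n, hgn j (n + 1), ← ENNReal.ofReal_mul hp0.le]
      congr 1
      ring
    calc ∑' n : ℕ, P {ω | G j ω = n + 1} * μ (j + 1) (q (n + 1) ⁻¹' A)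
        = P {ω | G j ω = 0 + 1} * μ (j + 1) (q (0 + 1) ⁻¹' A)
          + ∑' n : ℕ, P {ω | G j ω = n + 1 + 1} * μ (j + 1) (q (n + 1 + 1) ⁻¹' A) :=
          tsum_eq_zero_add' (f := fun n => P {ω | G j ω = n + 1} * μ (j + 1) (q (n + 1) ⁻¹' A))
            ENNReal.summable
    _ = ENNReal.ofReal (1 - p) * μ (j + 1) ((fun x : ℝ => 1 - u + u * x) ⁻¹' A)
          + ENNReal.ofReal p * ∑' n : ℕ, P {ω | G j ω = n + 1}
            * μ (j + 1) (q (n + 1) ⁻¹' ((fun x : ℝ => u * x) ⁻¹' A)) := by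
          rw [← hc0, hT0q, ← ENNReal.tsum_mul_left]
          congr 1
          apply tsum_congr
          intro n
          rw [hq2 n, ← mul_assoc, hpc n]
  have hμsupp : ∀ j, μ j (Set.Icc (0:ℝ) 1)ᶜ = 0 := by
    intro j
    rw [hμapp j _ measurableSet_Icc.compl]
    apply measure_mono_null _ hEc
    intro ω hω hωE
    exact hω (hrange ω hωE j)
  -- integral versions
  have hIntBdd : ∀ (ρ : Measure ℝ), IsProbabilityMeasure ρ → ∀ (f : ℝ → ℝ), Continuous f →
      (∀ x, |f x| ≤ 1) → Integrable f ρ := by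
    intro ρ hρ f hf hb
    exact (integrable_const (1:ℝ)).mono' hf.aestronglyMeasurable
      (Filter.Eventually.of_forall fun x => by simpa using hb x)
  have hνInt : ∀ f : ℝ → ℝ, Continuous f → (∀ x, |f x| ≤ 1) →
      ∫ x, f x ∂ν = (1 - p) * ∫ x, f (1 - u + u * x) ∂ν + p * ∫ x, f (u * x) ∂ν := by
    intro f hf hb
    have i0 : IsProbabilityMeasure (ν.map (fun x : ℝ => 1 - u + u * x)) :=
      Measure.isProbabilityMeasure_map hT₀m.aemeasurable
    have i1 : IsProbabilityMeasure (ν.map (fun x : ℝ => u * x)) :=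
      Measure.isProbabilityMeasure_map hT₁m.aemeasurable
    conv_lhs => rw [hss]
    rw [integral_add_measure
        ((hIntBdd _ i0 f hf hb).smul_measure ENNReal.ofReal_ne_top)
        ((hIntBdd _ i1 f hf hb).smul_measure ENNReal.ofReal_ne_top),
      integral_smul_measure, integral_smul_measure,
      integral_map hT₀m.aemeasurable hf.aestronglyMeasurable,
      integral_map hT₁m.aemeasurable hf.aestronglyMeasurable,
      ENNReal.toReal_ofReal (by linarith : (0:ℝ) ≤ 1 - p),
      ENNReal.toReal_ofReal hp0.le]
    simp [smul_eq_mul]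
  have hμInt : ∀ j (f : ℝ → ℝ), Continuous f → (∀ x, |f x| ≤ 1) →
      ∫ x, f x ∂(μ j) = (1 - p) * ∫ x, f (1 - u + u * x) ∂(μ (j + 1))
        + p * ∫ x, f (u * x) ∂(μ j) := by
    intro j f hf hb
    have i0 : IsProbabilityMeasure ((μ (j + 1)).map (fun x : ℝ => 1 - u + u * x)) := by
      have := hμprob (j + 1)
      exact Measure.isProbabilityMeasure_map hT₀m.aemeasurable
    have i1 : IsProbabilityMeasure ((μ j).map (fun x : ℝ => u * x)) := by
      have := hμprob j
      exact Measure.isProbabilityMeasure_map hT₁m.aemeasurable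
    conv_lhs => rw [hR j]
    rw [integral_add_measure
        ((hIntBdd _ i0 f hf hb).smul_measure ENNReal.ofReal_ne_top)
        ((hIntBdd _ i1 f hf hb).smul_measure ENNReal.ofReal_ne_top),
      integral_smul_measure, integral_smul_measure,
      integral_map hT₀m.aemeasurable hf.aestronglyMeasurable,
      integral_map hT₁m.aemeasurable hf.aestronglyMeasurable,
      ENNReal.toReal_ofReal (by linarith : (0:ℝ) ≤ 1 - p),
      ENNReal.toReal_ofReal hp0.le]
    simp [smul_eq_mul]
  -- Lipschitz structure of the maps
  have hT₀lip : LipschitzWith u.toNNReal (fun x : ℝ => 1 - u + u * x) := by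
    apply LipschitzWith.of_dist_le_mul; intro x y
    rw [Real.dist_eq, Real.dist_eq, Real.coe_toNNReal _ hu0.le]
    have h : (1 - u + u * x) - (1 - u + u * y) = u * (x - y) := by ring
    rw [h, abs_mul, abs_of_pos hu0]
  have hT₁lip : LipschitzWith u.toNNReal (fun x : ℝ => u * x) := by
    apply LipschitzWith.of_dist_le_mul; intro x y
    rw [Real.dist_eq, Real.dist_eq, Real.coe_toNNReal _ hu0.le, ← mul_sub, abs_mul,
      abs_of_pos hu0]
  -- oscillation bound
  have hosc : ∀ (ρ : Measure ℝ), IsProbabilityMeasure ρ → ρ (Set.Icc (0:ℝ) 1)ᶜ = 0 →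
      ∀ (L : NNReal) (f : ℝ → ℝ), (∀ x, |f x| ≤ 1) → LipschitzWith L f →
      |∫ x, f x ∂ρ - f 0| ≤ L := by
    intro ρ hρ hρsupp L f hb hf
    have hin : ∀ᵐ x ∂ρ, x ∈ Set.Icc (0:ℝ) 1 := by
      rw [ae_iff]
      have hcmp : {x : ℝ | ¬ x ∈ Set.Icc (0:ℝ) 1} = (Set.Icc (0:ℝ) 1)ᶜ := rfl
      rw [hcmp]
      exact hρsupp
    have hInt := hIntBdd ρ hρ f hf.continuous hb
    have hsub : ∫ x, f x ∂ρ - f 0 = ∫ x, (f x - f 0) ∂ρ := by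
      rw [integral_sub hInt (integrable_const _), integral_const, probReal_univ,
        one_smul]
    rw [hsub]
    have hbd : ∀ᵐ x ∂ρ, ‖f x - f 0‖ ≤ (L:ℝ) := by
      filter_upwards [hin] with x hx
      calc ‖f x - f 0‖ = dist (f x) (f 0) := by rw [dist_eq_norm]
      _ ≤ L * dist x 0 := hf.dist_le_mul x 0
      _ ≤ L * 1 := by
          apply mul_le_mul_of_nonneg_left _ L.coe_nonneg
          rw [Real.dist_eq, sub_zero]
          exact abs_le.2 ⟨by linarith [hx.1], hx.2⟩
      _ = L := mul_one _
    have hbound := norm_integral_le_of_norm_le_const (μ := ρ) hbd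
    simpa [Real.norm_eq_abs, measure_univ] using hbound
  -- contraction estimate
  have hcontr : ∀ (m : ℕ) (j : ℕ) (L : NNReal) (f : ℝ → ℝ), (∀ x, |f x| ≤ 1) →
      LipschitzWith L f → |∫ x, f x ∂ν - ∫ x, f x ∂(μ j)| ≤ 2 * L * u ^ m := by
    intro m
    induction m with
    | zero =>
      intro j L f hb hf
      have h1 := hosc ν inferInstance hsupp L f hb hf
      have h2 := hosc (μ j) (hμprob j) (hμsupp j) L f hb hf
      calc |∫ x, f x ∂ν - ∫ x, f x ∂(μ j)|
          ≤ |∫ x, f x ∂ν - f 0| + |f 0 - ∫ x, f x ∂(μ j)| := abs_sub_le _ _ _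
      _ ≤ (L:ℝ) + L := add_le_add h1 (by rwa [abs_sub_comm])
      _ = 2 * L * u ^ 0 := by rw [pow_zero]; ring
    | succ m ih =>
      intro j L f hb hf
      have hfc := hf.continuous
      rw [hνInt f hfc hb, hμInt j f hfc hb]
      have hb0 : ∀ x, |f (1 - u + u * x)| ≤ 1 := fun x => hb _
      have hb1 : ∀ x, |f (u * x)| ≤ 1 := fun x => hb _
      have hf0 : LipschitzWith (L * u.toNNReal) (fun x => f (1 - u + u * x)) := hf.comp hT₀lip
      have hf1 : LipschitzWith (L * u.toNNReal) (fun x => f (u * x)) := hf.comp hT₁lip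
      have h0 := ih (j + 1) (L * u.toNNReal) _ hb0 hf0
      have h1 := ih j (L * u.toNNReal) _ hb1 hf1
      have hcoe : ((L * u.toNNReal : NNReal) : ℝ) = L * u := by
        rw [NNReal.coe_mul, Real.coe_toNNReal _ hu0.le]
      rw [hcoe] at h0 h1
      have hexp : (1 - p) * ∫ x, f (1 - u + u * x) ∂ν + p * ∫ x, f (u * x) ∂ν
          - ((1 - p) * ∫ x, f (1 - u + u * x) ∂(μ (j + 1)) + p * ∫ x, f (u * x) ∂(μ j))
          = (1 - p) * (∫ x, f (1 - u + u * x) ∂ν - ∫ x, f (1 - u + u * x) ∂(μ (j + 1)))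
            + p * (∫ x, f (u * x) ∂ν - ∫ x, f (u * x) ∂(μ j)) := by ring
      rw [hexp]
      calc |(1 - p) * (∫ x, f (1 - u + u * x) ∂ν - ∫ x, f (1 - u + u * x) ∂(μ (j + 1)))
            + p * (∫ x, f (u * x) ∂ν - ∫ x, f (u * x) ∂(μ j))|
          ≤ |(1 - p) * (∫ x, f (1 - u + u * x) ∂ν - ∫ x, f (1 - u + u * x) ∂(μ (j + 1)))|
            + |p * (∫ x, f (u * x) ∂ν - ∫ x, f (u * x) ∂(μ j))| := abs_add_le _ _
      _ = (1 - p) * |∫ x, f (1 - u + u * x) ∂ν - ∫ x, f (1 - u + u * x) ∂(μ (j + 1))|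
            + p * |∫ x, f (u * x) ∂ν - ∫ x, f (u * x) ∂(μ j)| := by
          rw [abs_mul, abs_mul, abs_of_nonneg (by linarith : (0:ℝ) ≤ 1 - p),
            abs_of_nonneg hp0.le]
      _ ≤ (1 - p) * (2 * ((L:ℝ) * u) * u ^ m) + p * (2 * ((L:ℝ) * u) * u ^ m) :=
          add_le_add (mul_le_mul_of_nonneg_left h0 (by linarith))
            (mul_le_mul_of_nonneg_left h1 hp0.le)
      _ = 2 * L * u ^ (m + 1) := by ring
  -- equality of integrals of bounded Lipschitz functions
  have heq : ∀ (L : NNReal) (f : ℝ → ℝ), (∀ x, |f x| ≤ 1) → LipschitzWith L f →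
      ∫ x, f x ∂ν = ∫ x, f x ∂(μ 0) := by
    intro L f hb hf
    have htend : Filter.Tendsto (fun m : ℕ => 2 * (L:ℝ) * u ^ m) Filter.atTop (nhds 0) := by
      have h := tendsto_pow_atTop_nhds_zero_of_lt_one hu0.le hu1
      simpa using h.const_mul (2 * (L:ℝ))
    have habs : |∫ x, f x ∂ν - ∫ x, f x ∂(μ 0)| ≤ 0 :=
      ge_of_tendsto htend (Filter.Eventually.of_forall fun m => hcontr m 0 L f hb hf)
    have := abs_nonneg (∫ x, f x ∂ν - ∫ x, f x ∂(μ 0))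
    have hz : ∫ x, f x ∂ν - ∫ x, f x ∂(μ 0) = 0 := by
      rw [← abs_eq_zero]
      linarith
    linarith [hz]
  -- CDF equality
  have hCDF : ∀ a : ℝ, ν (Set.Iic a) = μ 0 (Set.Iic a) := by
    intro a
    set g : ℕ → ℝ → ℝ := fun k x => max 0 (min 1 (1 - (k + 1 : ℝ) * (x - a))) with hg_def
    have hglip : ∀ k : ℕ, LipschitzWith ((k : NNReal) + 1) (g k) := by
      intro k
      have h1 : LipschitzWith ((k : NNReal) + 1) (fun x : ℝ => 1 - (k + 1 : ℝ) * (x - a)) := by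
        apply LipschitzWith.of_dist_le_mul; intro x y
        rw [Real.dist_eq, Real.dist_eq]
        have h : (1 - (k + 1 : ℝ) * (x - a)) - (1 - (k + 1 : ℝ) * (y - a))
            = (k + 1 : ℝ) * (y - x) := by ring
        rw [h, abs_mul, abs_of_pos (by positivity : (0:ℝ) < (k + 1 : ℝ)), abs_sub_comm]
        apply le_of_eq
        push_cast
        ring
      exact (h1.const_min 1).const_max 0
    have hgbd : ∀ k x, |g k x| ≤ 1 := by
      intro k x
      rw [abs_le]
      constructor
      · have : (0:ℝ) ≤ g k x := le_max_left _ _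
        linarith
      · exact max_le (by norm_num) (min_le_left _ _)
    have hgtend : ∀ x, Filter.Tendsto (fun k => g k x) Filter.atTop
        (nhds (Set.indicator (Set.Iic a) (fun _ => (1:ℝ)) x)) := by
      intro x
      by_cases hx : x ≤ a
      · have hval : ∀ k : ℕ, g k x = 1 := by
          intro k
          have h1 : (1:ℝ) ≤ 1 - (k + 1 : ℝ) * (x - a) := by nlinarith [Nat.cast_nonneg (α := ℝ) k]
          show max 0 (min 1 (1 - (k + 1 : ℝ) * (x - a))) = 1
          rw [min_eq_left h1, max_eq_right (by norm_num : (0:ℝ) ≤ 1)]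
        rw [Set.indicator_of_mem (Set.mem_Iic.mpr hx)]
        simp only [hval]
        exact tendsto_const_nhds
      · push_neg at hx
        have hxa : 0 < x - a := by linarith
        have hev : ∀ᶠ k : ℕ in Filter.atTop, g k x = 0 := by
          filter_upwards [Filter.eventually_ge_atTop ⌈1 / (x - a)⌉₊] with k hk
          have hk' : 1 / (x - a) ≤ (k:ℝ) := by
            have := Nat.ceil_le.1 hk
            exact_mod_cast this
          have hle : 1 - (k + 1 : ℝ) * (x - a) ≤ 0 := by
            have h1 : (1:ℝ) ≤ (k:ℝ) * (x - a) := by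
              rw [div_le_iff₀ hxa] at hk'
              linarith
            nlinarith
          show max 0 (min 1 (1 - (k + 1 : ℝ) * (x - a))) = 0
          rw [min_eq_right (by linarith : 1 - (k + 1 : ℝ) * (x - a) ≤ (1:ℝ)),
            max_eq_left hle]
        rw [Set.indicator_of_notMem (by simpa using hx.not_ge : x ∉ Set.Iic a)]
        exact Filter.Tendsto.congr' (Filter.EventuallyEq.symm hev) tendsto_const_nhds
    have hdom : ∀ (ρ : Measure ℝ), IsProbabilityMeasure ρ →
        Filter.Tendsto (fun k => ∫ x, g k x ∂ρ) Filter.atTop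
          (nhds (∫ x, Set.indicator (Set.Iic a) (fun _ => (1:ℝ)) x ∂ρ)) := by
      intro ρ hρ
      apply tendsto_integral_of_dominated_convergence (fun _ => (1:ℝ))
      · intro k; exact ((hglip k).continuous).aestronglyMeasurable
      · exact integrable_const 1
      · intro k
        exact Filter.Eventually.of_forall fun x => by
          simpa [Real.norm_eq_abs] using hgbd k x
      · exact Filter.Eventually.of_forall hgtend
    have h1 := hdom ν inferInstance
    have h2 := hdom (μ 0) (hμprob 0)
    have hseq : (fun k => ∫ x, g k x ∂ν) = fun k => ∫ x, g k x ∂(μ 0) :=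
      funext fun k => heq _ _ (hgbd k) (hglip k)
    rw [hseq] at h1
    have hlim := tendsto_nhds_unique h1 h2
    have hiν : ∫ x, Set.indicator (Set.Iic a) (fun _ => (1:ℝ)) x ∂ν
        = (ν (Set.Iic a)).toReal := by
      rw [integral_indicator_const (1:ℝ) measurableSet_Iic, smul_eq_mul, mul_one]; rfl
    have hiμ : ∫ x, Set.indicator (Set.Iic a) (fun _ => (1:ℝ)) x ∂(μ 0)
        = (μ 0 (Set.Iic a)).toReal := by
      rw [integral_indicator_const (1:ℝ) measurableSet_Iic, smul_eq_mul, mul_one]; rfl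
    rw [hiν, hiμ] at hlim
    exact (ENNReal.toReal_eq_toReal_iff' (measure_ne_top ν _)
      (haveI := hμprob 0; measure_ne_top (μ 0) _)).1 hlim
  -- conclude
  haveI := hμprob 0
  have hfinal : ν = μ 0 := Measure.ext_of_Iic ν (μ 0) hCDF
  rw [hfinal]
  show Measure.map (S 0) P = _
  congr 1
  funext ω
  show (1 - u) / u * ∑' k, u ^ (∑ i ∈ Finset.range (k + 1), G (0 + i) ω)
    = (1 - u) / u * ∑' k, u ^ (T k ω)
  congr 1
  apply tsum_congr
  intro k
  rw [hT k ω]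
  congr 1
  apply Finset.sum_congr rfl
  intro i _
  congr 1
  omega
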